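/- The vector field with polar components U_r = -cos θ + 2θ sin θ, U_θ = -sin θ + 2θ cos θ (independent of r) with pressure p = -4 r^{-1} cos θ solves -Δu + ∇p = 0 and div u = 0 on ℝ² minus the origin (case λ = 0). -/

import Mathlib

open Real

/-- Polar radius. -/
noncomputable def polarR (x y : ℝ) : ℝ := Real.sqrt (x ^ 2 + y ^ 2)

/-- Polar angle, via the complex argument. -/
noncomputable def polarTheta (x y : ℝ) : ℝ := Complex.arg (x + y * Complex.I)

/-- Partial derivative in the first Cartesian variable. -/
noncomputable def dX (f : ℝ → ℝ → ℝ) (x y : ℝ) : ℝ := deriv (fun t => f t y) x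

/-- Partial derivative in the second Cartesian variable. -/
noncomputable def dY (f : ℝ → ℝ → ℝ) (x y : ℝ) : ℝ := deriv (fun t => f x t) y

/-- The two-dimensional Laplacian, componentwise in Cartesian coordinates. -/
noncomputable def lap2 (f : ℝ → ℝ → ℝ) (x y : ℝ) : ℝ :=
  deriv (fun s => deriv (fun t => f t y) s) x + deriv (fun s => deriv (fun t => f x t) s) y

/-- First Cartesian velocity component: `u₁ = U_r cos θ - U_θ sin θ = -cos 2θ`. -/
noncomputable def u1 (x y : ℝ) : ℝ :=
  (-Real.cos (polarTheta x y) + 2 * polarTheta x y * Real.sin (polarTheta x y)) *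
      Real.cos (polarTheta x y)
    - (-Real.sin (polarTheta x y) + 2 * polarTheta x y * Real.cos (polarTheta x y)) *
      Real.sin (polarTheta x y)

/-- Second Cartesian velocity component: `u₂ = U_r sin θ + U_θ cos θ = 2θ + sin 2θ`. -/
noncomputable def u2 (x y : ℝ) : ℝ :=
  (-Real.cos (polarTheta x y) + 2 * polarTheta x y * Real.sin (polarTheta x y)) *
      Real.sin (polarTheta x y)
    + (-Real.sin (polarTheta x y) + 2 * polarTheta x y * Real.cos (polarTheta x y)) *
      Real.cos (polarTheta x y)

/-- The pressure `p = -4 r⁻¹ cos θ`. -/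
noncomputable def pr (x y : ℝ) : ℝ := -4 * (polarR x y)⁻¹ * Real.cos (polarTheta x y)


open Real Filter

lemma argA {a : ℝ} (b : ℝ) (ha : 0 < a) :
    Complex.arg (a + b * Complex.I) = Real.arctan (b / a) := by
  have hre : (0:ℝ) < (↑a + ↑b * Complex.I).re := by simpa using ha
  have h1 : |Complex.arg (a + b * Complex.I)| < π / 2 :=
    Complex.abs_arg_lt_pi_div_two_iff.2 (Or.inl hre)
  have h2 := Complex.tan_arg (a + b * Complex.I)
  have h3 : ((a:ℂ) + b * Complex.I).im / ((a:ℂ) + b * Complex.I).re = b / a := by simp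
  rw [h3] at h2
  rw [← h2, Real.arctan_tan (by linarith [abs_lt.1 h1 |>.1]) (abs_lt.1 h1 |>.2)]

lemma argB (a : ℝ) {b : ℝ} (hb : 0 < b) :
    Complex.arg (a + b * Complex.I) = π / 2 - Real.arctan (a / b) := by
  set θ := π / 2 - Real.arctan (a / b) with hθ
  have harc := Real.arctan_mem_Ioo (a / b)
  have hr : (0:ℝ) < Real.sqrt (a ^ 2 + b ^ 2) := by positivity
  have hs : Real.sqrt (1 + (a / b) ^ 2) = Real.sqrt (a ^ 2 + b ^ 2) / b := by
    rw [eq_div_iff hb.ne', ← Real.sqrt_sq hb.le, ← Real.sqrt_mul (by positivity)]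
    congr 1
    field_simp
    rw [Real.sqrt_sq hb.le]; ring
  have hcos : Real.cos θ = a / Real.sqrt (a ^ 2 + b ^ 2) := by
    rw [hθ, Real.cos_pi_div_two_sub, Real.sin_arctan, hs]
    field_simp
  have hsin : Real.sin θ = b / Real.sqrt (a ^ 2 + b ^ 2) := by
    rw [hθ, Real.sin_pi_div_two_sub, Real.cos_arctan, hs]
    field_simp
  have key : ((Real.sqrt (a ^ 2 + b ^ 2) : ℝ) : ℂ) * (Complex.cos θ + Complex.sin θ * Complex.I)
      = a + b * Complex.I := by
    rw [← Complex.ofReal_cos, ← Complex.ofReal_sin, hcos, hsin]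
    push_cast
    rw [mul_add]
    rw [mul_div_cancel₀ _ (by exact_mod_cast hr.ne'), ← mul_assoc,
      mul_div_cancel₀ _ (by exact_mod_cast hr.ne' : ((Real.sqrt (a^2+b^2):ℝ):ℂ) ≠ 0)]
  rw [← key, Complex.arg_mul_cos_add_sin_mul_I hr ⟨by rw [hθ]; linarith [harc.1, harc.2, Real.pi_pos], by rw [hθ]; linarith [harc.1, harc.2, Real.pi_pos]⟩]

lemma argC (a : ℝ) {b : ℝ} (hb : b < 0) :
    Complex.arg (a + b * Complex.I) = -(π / 2) - Real.arctan (a / b) := by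
  set θ := -(π / 2) - Real.arctan (a / b) with hθ
  have harc := Real.arctan_mem_Ioo (a / b)
  have hr : (0:ℝ) < Real.sqrt (a ^ 2 + b ^ 2) := Real.sqrt_pos.2 (by nlinarith)
  have hb' : (0:ℝ) < -b := by linarith
  have hs : Real.sqrt (1 + (a / b) ^ 2) = Real.sqrt (a ^ 2 + b ^ 2) / (-b) := by
    rw [eq_div_iff hb'.ne', ← Real.sqrt_sq hb'.le,
      ← Real.sqrt_mul (by positivity : (0:ℝ) ≤ 1 + (a / b) ^ 2)]
    congr 1
    field_simp
    rw [mul_add, mul_one, mul_div_cancel₀ _ (pow_ne_zero 2 hb.ne), add_comm]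
  have hθeq : θ = -(π / 2 + Real.arctan (a / b)) := by rw [hθ]; ring
  have hcos : Real.cos θ = a / Real.sqrt (a ^ 2 + b ^ 2) := by
    rw [hθeq, Real.cos_neg, Real.cos_add, Real.cos_pi_div_two, Real.sin_pi_div_two,
      Real.sin_arctan, hs]
    field_simp [hr.ne']
    rw [zero_mul, zero_mul, zero_sub, neg_neg, mul_div_cancel_right₀ _ hb.ne]
  have hsin : Real.sin θ = b / Real.sqrt (a ^ 2 + b ^ 2) := by
    rw [hθeq, Real.sin_neg, Real.sin_add, Real.cos_pi_div_two, Real.sin_pi_div_two,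
      Real.cos_arctan, hs]
    field_simp [hr.ne']
    simp
  have key : ((Real.sqrt (a ^ 2 + b ^ 2) : ℝ) : ℂ) * (Complex.cos θ + Complex.sin θ * Complex.I)
      = a + b * Complex.I := by
    rw [← Complex.ofReal_cos, ← Complex.ofReal_sin, hcos, hsin]
    push_cast
    rw [mul_add]
    rw [mul_div_cancel₀ _ (by exact_mod_cast hr.ne'), ← mul_assoc,
      mul_div_cancel₀ _ (by exact_mod_cast hr.ne' : ((Real.sqrt (a^2+b^2):ℝ):ℂ) ≠ 0)]
  rw [← key, Complex.arg_mul_cos_add_sin_mul_I hr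
    ⟨by rw [hθ]; linarith [harc.1, harc.2, Real.pi_pos],
     by rw [hθ]; linarith [harc.1, harc.2, Real.pi_pos]⟩]



lemma r2_pos {a b : ℝ} (h : (a, b) ≠ ((0:ℝ), (0:ℝ))) : 0 < a ^ 2 + b ^ 2 := by
  rcases eq_or_ne a 0 with ha | ha
  · have hb : b ≠ 0 := by rintro rfl; exact h (by rw [ha])
    positivity
  · positivity

lemma cos_sin_polarTheta {a b : ℝ} (h : (a, b) ≠ ((0:ℝ), (0:ℝ))) :
    Real.cos (polarTheta a b) = a / Real.sqrt (a ^ 2 + b ^ 2) ∧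
    Real.sin (polarTheta a b) = b / Real.sqrt (a ^ 2 + b ^ 2) := by
  have hz : (a : ℂ) + b * Complex.I ≠ 0 := by
    intro hz
    have h1 : a = 0 := by simpa using congrArg Complex.re hz
    have h2 : b = 0 := by simpa using congrArg Complex.im hz
    exact h (by rw [h1, h2])
  constructor
  · rw [polarTheta, Complex.cos_arg hz, Complex.norm_add_mul_I]; simp
  · rw [polarTheta, Complex.sin_arg, Complex.norm_add_mul_I]; simp







lemma sqrt_facts {a b : ℝ} (h : (a, b) ≠ ((0:ℝ), (0:ℝ))) :
    Real.sqrt (a ^ 2 + b ^ 2) ^ 2 = a ^ 2 + b ^ 2 ∧ Real.sqrt (a ^ 2 + b ^ 2) ≠ 0 :=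
  ⟨Real.sq_sqrt (r2_pos h).le, (Real.sqrt_pos.2 (r2_pos h)).ne'⟩

lemma u1_eq {a b : ℝ} (h : (a, b) ≠ ((0:ℝ), (0:ℝ))) :
    u1 a b = (b ^ 2 - a ^ 2) / (a ^ 2 + b ^ 2) := by
  obtain ⟨hs, hs0⟩ := sqrt_facts h
  rw [u1, (cos_sin_polarTheta h).1, (cos_sin_polarTheta h).2]
  set s := Real.sqrt (a ^ 2 + b ^ 2)
  rw [← hs]
  field_simp
  ring

lemma u2_eq {a b : ℝ} (h : (a, b) ≠ ((0:ℝ), (0:ℝ))) :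
    u2 a b = 2 * polarTheta a b - 2 * a * b / (a ^ 2 + b ^ 2) := by
  obtain ⟨hs, hs0⟩ := sqrt_facts h
  rw [u2, (cos_sin_polarTheta h).1, (cos_sin_polarTheta h).2]
  set s := Real.sqrt (a ^ 2 + b ^ 2)
  rw [← hs]
  field_simp
  linear_combination (-2) * polarTheta a b * hs

lemma pr_eq {a b : ℝ} (h : (a, b) ≠ ((0:ℝ), (0:ℝ))) :
    pr a b = -4 * a / (a ^ 2 + b ^ 2) := by
  obtain ⟨hs, hs0⟩ := sqrt_facts h
  rw [pr, polarR, (cos_sin_polarTheta h).1]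
  set s := Real.sqrt (a ^ 2 + b ^ 2)
  rw [← hs]
  field_simp




lemma polarTheta_of_neg {t : ℝ} (ht : t < 0) : polarTheta t 0 = π := by
  rw [polarTheta]
  push_cast
  rw [mul_comm, mul_zero, add_zero, Complex.arg_ofReal_of_neg ht]

lemma polarTheta_of_pos {t : ℝ} (ht : 0 < t) : polarTheta t 0 = 0 := by
  rw [polarTheta]
  push_cast
  rw [mul_comm, mul_zero, add_zero, Complex.arg_ofReal_of_nonneg ht.le]

lemma hasDerivAt_theta_x {a b : ℝ} (h : (a, b) ≠ ((0:ℝ), (0:ℝ))) :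
    HasDerivAt (fun t => polarTheta t b) (-b / (a ^ 2 + b ^ 2)) a := by
  have hr2 := (r2_pos h).ne'
  rcases lt_trichotomy b 0 with hb | hb | hb
  · have hfun : (fun t => polarTheta t b) = fun t => -(π / 2) - Real.arctan (t / b) := by
      funext t; exact argC t hb
    rw [hfun]
    have h1 : HasDerivAt (fun t : ℝ => t / b) (1 / b) a := by
      simpa using (hasDerivAt_id a).div_const b
    have h2 : HasDerivAt (fun t : ℝ => Real.arctan (t / b))
        (1 / (1 + (a / b) ^ 2) * (1 / b)) a := by
        have := (Real.hasDerivAt_arctan (a / b)).comp a h1; exact this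
    have h3 := h2.const_sub (-(π / 2))
    convert h3 using 1
    · rfl
    · rfl
    have hbne : b ≠ 0 := hb.ne
    rw [div_pow, one_add_div (pow_ne_zero 2 hbne)]
    field_simp
    ring
  · subst hb
    have ha : a ≠ 0 := by rintro rfl; exact h rfl
    rcases ha.lt_or_gt with ha' | ha'
    · refine (hasDerivAt_const a π).congr_of_eventuallyEq ?_ |>.congr_deriv ?_
      · filter_upwards [eventually_lt_nhds ha'] with t ht
        exact polarTheta_of_neg ht
      · simp
    · refine (hasDerivAt_const a 0).congr_of_eventuallyEq ?_ |>.congr_deriv ?_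
      · filter_upwards [eventually_gt_nhds ha'] with t ht
        exact polarTheta_of_pos ht
      · simp
  · have hfun : (fun t => polarTheta t b) = fun t => π / 2 - Real.arctan (t / b) := by
      funext t; exact argB t hb
    rw [hfun]
    have h1 : HasDerivAt (fun t : ℝ => t / b) (1 / b) a := by
      simpa using (hasDerivAt_id a).div_const b
    have h2 : HasDerivAt (fun t : ℝ => Real.arctan (t / b))
        (1 / (1 + (a / b) ^ 2) * (1 / b)) a := by
        have := (Real.hasDerivAt_arctan (a / b)).comp a h1; exact this
    have h3 := h2.const_sub (π / 2)
    convert h3 using 1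
    · rfl
    · rfl
    have hbne : b ≠ 0 := hb.ne'
    rw [div_pow, one_add_div (pow_ne_zero 2 hbne)]
    field_simp
    ring

lemma hasDerivAt_theta_y {a b : ℝ} (h : b ≠ 0 ∨ 0 < a) :
    HasDerivAt (fun t => polarTheta a t) (a / (a ^ 2 + b ^ 2)) b := by
  rcases lt_trichotomy b 0 with hb | hb | hb
  · have hbne : b ≠ 0 := hb.ne
    have h1 : HasDerivAt (fun t : ℝ => a / t) (-(a / b ^ 2)) b := by
      simpa [div_eq_mul_inv, mul_comm] using (hasDerivAt_inv hbne).const_mul a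
    have h2 : HasDerivAt (fun t : ℝ => Real.arctan (a / t))
        (1 / (1 + (a / b) ^ 2) * (-(a / b ^ 2))) b := (Real.hasDerivAt_arctan (a / b)).comp b h1
    have h3 := h2.const_sub (-(π / 2))
    refine (h3.congr_of_eventuallyEq ?_).congr_deriv ?_
    · filter_upwards [eventually_lt_nhds hb] with t ht
      exact argC a ht
    · field_simp
      ring
  · subst hb
    have ha : 0 < a := by tauto
    have hfun : (fun t => polarTheta a t) = fun t => Real.arctan (t / a) := by
      funext t; exact argA t ha
    rw [hfun]
    have h1 : HasDerivAt (fun t : ℝ => t / a) (1 / a) 0 := by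
      simpa using (hasDerivAt_id (0:ℝ)).div_const a
    have h2 : HasDerivAt (fun t : ℝ => Real.arctan (t / a))
        (1 / (1 + ((0:ℝ) / a) ^ 2) * (1 / a)) 0 := by
        have := (Real.hasDerivAt_arctan ((0:ℝ) / a)).comp 0 h1; exact this
    refine h2.congr_deriv ?_
    field_simp
  · have hbne : b ≠ 0 := hb.ne'
    have h1 : HasDerivAt (fun t : ℝ => a / t) (-(a / b ^ 2)) b := by
      simpa [div_eq_mul_inv, mul_comm] using (hasDerivAt_inv hbne).const_mul a
    have h2 : HasDerivAt (fun t : ℝ => Real.arctan (a / t))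
        (1 / (1 + (a / b) ^ 2) * (-(a / b ^ 2))) b := (Real.hasDerivAt_arctan (a / b)).comp b h1
    have h3 := h2.const_sub (π / 2)
    refine (h3.congr_of_eventuallyEq ?_).congr_deriv ?_
    · filter_upwards [eventually_gt_nhds hb] with t ht
      exact argB a ht
    · field_simp
      ring

lemma hd_div {n d : ℝ → ℝ} {n' d' v a : ℝ} (hn : HasDerivAt n n' a) (hdd : HasDerivAt d d' a)
    (hda : d a ≠ 0) (hv : v = (n' * d a - n a * d') / d a ^ 2) :
    HasDerivAt (fun t => n t / d t) v a := hv ▸ hn.div hdd hda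

lemma hd_sq (a : ℝ) : HasDerivAt (fun t : ℝ => t ^ 2) (2 * a) a := by
  simpa using hasDerivAt_pow 2 a

lemma ev_ne {a b : ℝ} (h : (a, b) ≠ ((0:ℝ), (0:ℝ))) :
    ∀ᶠ t in nhds a, (t, b) ≠ ((0:ℝ), (0:ℝ)) := by
  rcases eq_or_ne b 0 with rfl | hb
  · have ha : a ≠ 0 := by rintro rfl; exact h rfl
    filter_upwards [eventually_ne_nhds ha] with t ht
    exact fun hc => ht (congrArg Prod.fst hc)
  · filter_upwards with t
    simp [hb]

lemma ev_ne' {a b : ℝ} (h : (a, b) ≠ ((0:ℝ), (0:ℝ))) :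
    ∀ᶠ t in nhds b, (a, t) ≠ ((0:ℝ), (0:ℝ)) := by
  rcases eq_or_ne a 0 with rfl | ha
  · have hb : b ≠ 0 := by rintro rfl; exact h rfl
    filter_upwards [eventually_ne_nhds hb] with t ht
    exact fun hc => ht (congrArg Prod.snd hc)
  · filter_upwards with t
    simp [ha]

lemma hd_u1_x {a b : ℝ} (h : (a, b) ≠ ((0:ℝ), (0:ℝ))) :
    HasDerivAt (fun t => u1 t b) (-4 * a * b ^ 2 / (a ^ 2 + b ^ 2) ^ 2) a := by
  have hr2 := (r2_pos h).ne'
  have H : HasDerivAt (fun t : ℝ => (b ^ 2 - t ^ 2) / (t ^ 2 + b ^ 2))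
      (-4 * a * b ^ 2 / (a ^ 2 + b ^ 2) ^ 2) a := by
    refine hd_div ((hd_sq a).const_sub (b ^ 2)) ((hd_sq a).add_const (b ^ 2)) hr2 ?_
    field_simp
    ring
  refine H.congr_of_eventuallyEq ?_
  filter_upwards [ev_ne h] with t ht
  exact u1_eq ht

lemma hd_u1_y {a b : ℝ} (h : (a, b) ≠ ((0:ℝ), (0:ℝ))) :
    HasDerivAt (fun t => u1 a t) (4 * a ^ 2 * b / (a ^ 2 + b ^ 2) ^ 2) b := by
  have hr2 := (r2_pos h).ne'
  have H : HasDerivAt (fun t : ℝ => (t ^ 2 - a ^ 2) / (a ^ 2 + t ^ 2))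
      (4 * a ^ 2 * b / (a ^ 2 + b ^ 2) ^ 2) b := by
    refine hd_div ((hd_sq b).sub_const (a ^ 2)) ((hd_sq b).const_add (a ^ 2)) hr2 ?_
    field_simp
    ring
  refine H.congr_of_eventuallyEq ?_
  filter_upwards [ev_ne' h] with t ht
  exact u1_eq ht

lemma hd_u2_x {a b : ℝ} (h : (a, b) ≠ ((0:ℝ), (0:ℝ))) :
    HasDerivAt (fun t => u2 t b) (-4 * b ^ 3 / (a ^ 2 + b ^ 2) ^ 2) a := by
  have hr2 := (r2_pos h).ne'
  have H1 := (hasDerivAt_theta_x h).const_mul 2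
  have H2 : HasDerivAt (fun t : ℝ => 2 * t * b / (t ^ 2 + b ^ 2))
      (2 * b * (b ^ 2 - a ^ 2) / (a ^ 2 + b ^ 2) ^ 2) a := by
    have hn : HasDerivAt (fun t : ℝ => 2 * t * b) (2 * b) a := by
      simpa using ((hasDerivAt_id a).const_mul 2).mul_const b
    refine hd_div hn ((hd_sq a).add_const (b ^ 2)) hr2 ?_
    field_simp
    ring
  have H := H1.sub H2
  refine (H.congr_of_eventuallyEq ?_).congr_deriv ?_
  · filter_upwards [ev_ne h] with t ht
    exact u2_eq ht
  · field_simp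
    ring

lemma hd_u2_y {a b : ℝ} (h : (a, b) ≠ ((0:ℝ), (0:ℝ))) (h' : b ≠ 0 ∨ 0 < a) :
    HasDerivAt (fun t => u2 a t) (4 * a * b ^ 2 / (a ^ 2 + b ^ 2) ^ 2) b := by
  have hr2 := (r2_pos h).ne'
  have H1 := (hasDerivAt_theta_y h').const_mul 2
  have H2 : HasDerivAt (fun t : ℝ => 2 * a * t / (a ^ 2 + t ^ 2))
      (2 * a * (a ^ 2 - b ^ 2) / (a ^ 2 + b ^ 2) ^ 2) b := by
    have hn : HasDerivAt (fun t : ℝ => 2 * a * t) (2 * a) b := by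
      simpa using (hasDerivAt_id b).const_mul (2 * a)
    refine hd_div hn ((hd_sq b).const_add (a ^ 2)) hr2 ?_
    field_simp
    ring
  have H := H1.sub H2
  refine (H.congr_of_eventuallyEq ?_).congr_deriv ?_
  · filter_upwards [ev_ne' h] with t ht
    exact u2_eq ht
  · field_simp
    ring

lemma hd_pr_x {a b : ℝ} (h : (a, b) ≠ ((0:ℝ), (0:ℝ))) :
    HasDerivAt (fun t => pr t b) (4 * (a ^ 2 - b ^ 2) / (a ^ 2 + b ^ 2) ^ 2) a := by
  have hr2 := (r2_pos h).ne'
  have H : HasDerivAt (fun t : ℝ => -4 * t / (t ^ 2 + b ^ 2))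
      (4 * (a ^ 2 - b ^ 2) / (a ^ 2 + b ^ 2) ^ 2) a := by
    have hn : HasDerivAt (fun t : ℝ => -4 * t) (-4 : ℝ) a := by
      simpa using (hasDerivAt_id a).const_mul (-4 : ℝ)
    refine hd_div hn ((hd_sq a).add_const (b ^ 2)) hr2 ?_
    field_simp
    ring
  refine H.congr_of_eventuallyEq ?_
  filter_upwards [ev_ne h] with t ht
  exact pr_eq ht

lemma hd_pr_y {a b : ℝ} (h : (a, b) ≠ ((0:ℝ), (0:ℝ))) :
    HasDerivAt (fun t => pr a t) (8 * a * b / (a ^ 2 + b ^ 2) ^ 2) b := by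
  have hr2 := (r2_pos h).ne'
  have H : HasDerivAt (fun t : ℝ => -4 * a / (a ^ 2 + t ^ 2))
      (8 * a * b / (a ^ 2 + b ^ 2) ^ 2) b := by
    refine hd_div (hasDerivAt_const b (-4 * a)) ((hd_sq b).const_add (a ^ 2)) hr2 ?_
    field_simp
    ring
  refine H.congr_of_eventuallyEq ?_
  filter_upwards [ev_ne' h] with t ht
  exact pr_eq ht

lemma deriv_u2_y {a b : ℝ} (h : (a, b) ≠ ((0:ℝ), (0:ℝ))) :
    deriv (fun t => u2 a t) b = 4 * a * b ^ 2 / (a ^ 2 + b ^ 2) ^ 2 := by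
  by_cases h' : b ≠ 0 ∨ 0 < a
  · exact (hd_u2_y h h').deriv
  · push_neg at h'
    obtain ⟨rfl, ha0⟩ := h'
    have ha : a < 0 := by
      rcases ha0.lt_or_eq with ha | ha
      · exact ha
      · exact absurd (by rw [ha]) h
    have hane : ∀ t : ℝ, (a, t) ≠ ((0:ℝ), (0:ℝ)) := by
      intro t hc
      exact ha.ne (congrArg Prod.fst hc)
    -- the limit from below is -2π
    have hlim : Tendsto (fun t => u2 a t) (nhdsWithin 0 (Set.Iio 0)) (nhds (2 * (-π) - 0)) := by
      have harg : Tendsto (fun t : ℝ => Complex.arg (a + t * Complex.I))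
          (nhdsWithin 0 (Set.Iio 0)) (nhds (-π)) := by
        have hmap : Tendsto (fun t : ℝ => (a : ℂ) + t * Complex.I)
            (nhdsWithin 0 (Set.Iio 0)) (nhdsWithin (a : ℂ) {z : ℂ | z.im < 0}) := by
          rw [tendsto_nhdsWithin_iff]
          constructor
          · apply Tendsto.mono_left _ nhdsWithin_le_nhds
            have : Continuous (fun t : ℝ => (a : ℂ) + t * Complex.I) := by continuity
            simpa using this.tendsto 0
          · filter_upwards [self_mem_nhdsWithin] with t ht
            simpa using ht
        exact (Complex.tendsto_arg_nhdsWithin_im_neg_of_re_neg_of_im_zero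
          (by simpa using ha) (by simp)).comp hmap
      have hrat : Tendsto (fun t : ℝ => 2 * a * t / (a ^ 2 + t ^ 2))
          (nhdsWithin 0 (Set.Iio 0)) (nhds 0) := by
        apply Tendsto.mono_left _ nhdsWithin_le_nhds
        have hc : ContinuousAt (fun t : ℝ => 2 * a * t / (a ^ 2 + t ^ 2)) 0 := by
          apply ContinuousAt.div
          · fun_prop
          · fun_prop
          · simpa using pow_ne_zero 2 ha.ne
        simpa using hc.tendsto
      have : Tendsto (fun t : ℝ => 2 * polarTheta a t - 2 * a * t / (a ^ 2 + t ^ 2))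
          (nhdsWithin 0 (Set.Iio 0)) (nhds (2 * (-π) - 0)) :=
        ((harg.const_mul 2).sub hrat)
      refine this.congr ?_
      intro t
      exact (u2_eq (hane t)).symm
    have hval : u2 a 0 = 2 * π := by
      rw [u2_eq (hane 0), polarTheta_of_neg ha]
      simp
    have hnd : ¬DifferentiableAt ℝ (fun t => u2 a t) 0 := by
      intro hd
      have hcont : Tendsto (fun t => u2 a t) (nhdsWithin 0 (Set.Iio 0)) (nhds (2 * π)) := by
        rw [← hval]
        exact hd.continuousAt.continuousWithinAt.tendsto
      have := tendsto_nhds_unique hlim hcont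
      have hpi := Real.pi_pos
      nlinarith
    rw [deriv_zero_of_not_differentiableAt hnd]
    simp



theorem stmt_13 :
    ∀ x y : ℝ, (x, y) ≠ (0, 0) →
      (-(lap2 u1 x y) + dX pr x y = 0 ∧ -(lap2 u2 x y) + dY pr x y = 0) ∧
      dX u1 x y + dY u2 x y = 0 := by
  intro x y h
  have hr2 := (r2_pos h).ne'
  have hr2q : ((x ^ 2 + y ^ 2) ^ 2 : ℝ) ≠ 0 := pow_ne_zero 2 hr2
  have hA : deriv (fun s => deriv (fun t => u1 t y) s) x
      = -4 * y ^ 2 * (y ^ 2 - 3 * x ^ 2) / (x ^ 2 + y ^ 2) ^ 3 := by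
    have hev : (fun s => deriv (fun t => u1 t y) s) =ᶠ[nhds x]
        (fun s => -4 * s * y ^ 2 / (s ^ 2 + y ^ 2) ^ 2) := by
      filter_upwards [ev_ne h] with s hs using (hd_u1_x hs).deriv
    rw [hev.deriv_eq]
    have hden : HasDerivAt (fun s : ℝ => (s ^ 2 + y ^ 2) ^ 2) (2 * (x ^ 2 + y ^ 2) * (2 * x)) x := by
      simpa using ((hd_sq x).add_const (y ^ 2)).fun_pow 2
    have hn : HasDerivAt (fun s : ℝ => -4 * s * y ^ 2) (-4 * y ^ 2) x := by
      simpa using ((hasDerivAt_id x).const_mul (-4 : ℝ)).mul_const (y ^ 2)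
    refine (hd_div hn hden hr2q ?_).deriv
    field_simp
    ring
  have hB : deriv (fun s => deriv (fun t => u1 x t) s) y
      = 4 * x ^ 2 * (x ^ 2 - 3 * y ^ 2) / (x ^ 2 + y ^ 2) ^ 3 := by
    have hev : (fun s => deriv (fun t => u1 x t) s) =ᶠ[nhds y]
        (fun s => 4 * x ^ 2 * s / (x ^ 2 + s ^ 2) ^ 2) := by
      filter_upwards [ev_ne' h] with s hs using (hd_u1_y hs).deriv
    rw [hev.deriv_eq]
    have hden : HasDerivAt (fun s : ℝ => (x ^ 2 + s ^ 2) ^ 2) (2 * (x ^ 2 + y ^ 2) * (2 * y)) y := by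
      simpa using ((hd_sq y).const_add (x ^ 2)).fun_pow 2
    have hn : HasDerivAt (fun s : ℝ => 4 * x ^ 2 * s) (4 * x ^ 2) y := by
      simpa using (hasDerivAt_id y).const_mul (4 * x ^ 2)
    refine (hd_div hn hden hr2q ?_).deriv
    field_simp
    ring
  have hC : deriv (fun s => deriv (fun t => u2 t y) s) x
      = 16 * x * y ^ 3 / (x ^ 2 + y ^ 2) ^ 3 := by
    have hev : (fun s => deriv (fun t => u2 t y) s) =ᶠ[nhds x]
        (fun s => -4 * y ^ 3 / (s ^ 2 + y ^ 2) ^ 2) := by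
      filter_upwards [ev_ne h] with s hs using (hd_u2_x hs).deriv
    rw [hev.deriv_eq]
    have hden : HasDerivAt (fun s : ℝ => (s ^ 2 + y ^ 2) ^ 2) (2 * (x ^ 2 + y ^ 2) * (2 * x)) x := by
      simpa using ((hd_sq x).add_const (y ^ 2)).fun_pow 2
    refine (hd_div (hasDerivAt_const x (-4 * y ^ 3)) hden hr2q ?_).deriv
    field_simp
    ring
  have hD : deriv (fun s => deriv (fun t => u2 x t) s) y
      = 8 * x * y * (x ^ 2 - y ^ 2) / (x ^ 2 + y ^ 2) ^ 3 := by
    have hev : (fun s => deriv (fun t => u2 x t) s) =ᶠ[nhds y]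
        (fun s => 4 * x * s ^ 2 / (x ^ 2 + s ^ 2) ^ 2) := by
      filter_upwards [ev_ne' h] with s hs using deriv_u2_y hs
    rw [hev.deriv_eq]
    have hden : HasDerivAt (fun s : ℝ => (x ^ 2 + s ^ 2) ^ 2) (2 * (x ^ 2 + y ^ 2) * (2 * y)) y := by
      simpa using ((hd_sq y).const_add (x ^ 2)).fun_pow 2
    have hn : HasDerivAt (fun s : ℝ => 4 * x * s ^ 2) (4 * x * (2 * y)) y := by
      simpa [mul_assoc] using (hd_sq y).const_mul (4 * x)
    refine (hd_div hn hden hr2q ?_).deriv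
    field_simp
    ring
  refine ⟨⟨?_, ?_⟩, ?_⟩
  · show -(deriv _ x + deriv _ y) + deriv (fun t => pr t y) x = 0
    rw [hA, hB, (hd_pr_x h).deriv]
    field_simp
    ring
  · show -(deriv _ x + deriv _ y) + deriv (fun t => pr x t) y = 0
    rw [hC, hD, (hd_pr_y h).deriv]
    field_simp
    ring
  · show deriv (fun t => u1 t y) x + deriv (fun t => u2 x t) y = 0
    rw [(hd_u1_x h).deriv, deriv_u2_y h]
    field_simp
    ring
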